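/- Let a^E(u,v) = ∫_E κ ∇u·∇v̄ with κ constant on E, and let S^E be a symmetric semi-positive sesquilinear form on V_h^E satisfying a₀ a^E(w,w) ≤ S^E(w,w) ≤ a₁ a^E(w,w) for all w ∈ V_h^E ∩ ker(Π^{∇,E}). Define a_h^E(u,v) = a^E(Π^{∇,E}u, Π^{∇,E}v) + S^E(u − Π^{∇,E}u, v − Π^{∇,E}v). Then a_h^E is consistent (a_h^E(p, v) = a^E(p,v) for all p ∈ P₁(E), v ∈ V_h^E) and stable: min{1,a₀} a^E(v,v) ≤ a_h^E(v,v) ≤ max{1,a₁} a^E(v,v) for all v ∈ V_h^E. -/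
import Mathlib


open scoped ComplexConjugate

/-- Consistency and stability of the VEM discrete form
`a_h(u,v) = a(Πu, Πv) + S(u − Πu, v − Πv)`, where `Π` is the energy
projection onto the polynomial subspace `P₁` and `S` is any symmetric
semi-positive stabilizing form equivalent to `a` on `ker Π`:
`a_h(p,v) = a(p,v)` for `p ∈ P₁`, and
`min{1,a₀} a(v,v) ≤ a_h(v,v) ≤ max{1,a₁} a(v,v)`. -/
theorem stmt18
    {V : Type*} [AddCommGroup V] [Module ℂ V]
    (P1 : Submodule ℂ V)
    (aE SE : V → V → ℂ)
    (Proj : V →ₗ[ℂ] V)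
    (hProjmem : ∀ v, Proj v ∈ P1)
    (hProjid : ∀ p ∈ P1, Proj p = p)
    -- `a` is Hermitian, additive, with real nonnegative diagonal
    (haHerm : ∀ v w, aE w v = conj (aE v w))
    (haadd₁ : ∀ x y z, aE (x + y) z = aE x z + aE y z)
    (hapos : ∀ v, 0 ≤ (aE v v).re)
    -- Pythagorean orthogonality of the energy projection
    (haortho : ∀ v, ∀ p ∈ P1, aE (v - Proj v) p = 0)
    -- `S` is symmetric, additive, semi-positive
    (hSsymm : ∀ v w, SE w v = conj (SE v w))
    (hSadd₁ : ∀ x y z, SE (x + y) z = SE x z + SE y z)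
    (hSpos : ∀ v, 0 ≤ (SE v v).re)
    -- stability bounds on the kernel of the projection
    (a₀ a₁ : ℝ) (ha₀ : 0 < a₀)
    (hstab : ∀ w : V, Proj w = 0 →
      a₀ * (aE w w).re ≤ (SE w w).re ∧ (SE w w).re ≤ a₁ * (aE w w).re) :
    (∀ p ∈ P1, ∀ v : V,
        aE (Proj p) (Proj v) + SE (p - Proj p) (v - Proj v) = aE p v) ∧
    (∀ v : V,
        min 1 a₀ * (aE v v).re ≤
          (aE (Proj v) (Proj v) + SE (v - Proj v) (v - Proj v)).re ∧
        (aE (Proj v) (Proj v) + SE (v - Proj v) (v - Proj v)).re ≤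
          max 1 a₁ * (aE v v).re) := by

  -- zero lemmas
  have haz₁ : ∀ z, aE 0 z = 0 := by
    intro z
    have h := haadd₁ 0 0 z
    rw [add_zero] at h
    exact (left_eq_add.mp h)
  have hSz₁ : ∀ z, SE 0 z = 0 := by
    intro z
    have h := hSadd₁ 0 0 z
    rw [add_zero] at h
    exact (left_eq_add.mp h)
  -- projection of the kernel part vanishes
  have hProjw : ∀ v : V, Proj (v - Proj v) = 0 := by
    intro v
    rw [map_sub, hProjid _ (hProjmem v), sub_self]
  have haadd₂ : ∀ x y z, aE z (x + y) = aE z x + aE z y := by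
    intro x y z
    rw [haHerm, haadd₁, map_add, ← haHerm, ← haHerm]
  -- ortho in the second argument
  have haortho₂ : ∀ v, ∀ p ∈ P1, aE p (v - Proj v) = 0 := by
    intro v p hp
    rw [haHerm, haortho v p hp, map_zero]
  -- Pythagoras
  have hPyth : ∀ v : V, (aE v v).re
      = (aE (Proj v) (Proj v)).re + (aE (v - Proj v) (v - Proj v)).re := by
    intro v
    have hv : Proj v + (v - Proj v) = v := by abel
    have hexp : aE v v = aE (Proj v) (Proj v) + aE (v - Proj v) (v - Proj v) := by
      calc aE v v = aE (Proj v + (v - Proj v)) v := by rw [hv]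
        _ = aE (Proj v) v + aE (v - Proj v) v := haadd₁ _ _ _
        _ = aE (Proj v) (Proj v + (v - Proj v))
            + aE (v - Proj v) (Proj v + (v - Proj v)) := by rw [hv]
        _ = aE (Proj v) (Proj v) + aE (Proj v) (v - Proj v)
            + (aE (v - Proj v) (Proj v) + aE (v - Proj v) (v - Proj v)) := by
              rw [haadd₂, haadd₂]
        _ = aE (Proj v) (Proj v) + aE (v - Proj v) (v - Proj v) := by
              rw [haortho₂ v (Proj v) (hProjmem v),
                haortho v (Proj v) (hProjmem v)]
              ring
    rw [hexp, Complex.add_re]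
  constructor
  · intro p hp v
    rw [hProjid p hp, sub_self, hSz₁, add_zero]
    have h := haortho₂ v p hp
    have hv : Proj v + (v - Proj v) = v := by abel
    have : aE p v = aE p (Proj v) + aE p (v - Proj v) := by
      rw [← haadd₂, hv]
    rw [this, h, add_zero]
  · intro v
    set w := v - Proj v with hw
    obtain ⟨hs1, hs2⟩ := hstab w (hProjw v)
    have hP := hPyth v
    have h1 := hapos (Proj v)
    have h2 := hapos w
    have hmin : min 1 a₀ ≤ 1 := min_le_left _ _
    have hmin' : min 1 a₀ ≤ a₀ := min_le_right _ _
    have hmax : (1:ℝ) ≤ max 1 a₁ := le_max_left _ _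
    have hmax' : a₁ ≤ max 1 a₁ := le_max_right _ _
    rw [Complex.add_re]
    constructor
    · nlinarith
    · nlinarith
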